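/- There exists a 5-chromatic tournament on 19 vertices: the tournament D obtained from Pal_7 by blowing up each of the vertices 1,...,6 into a directed triangle is not 4-colorable. -/

import Mathlib

set_option maxRecDepth 40000

def IsTournament {V : Type*} (r : V → V → Prop) : Prop :=
  (∀ v, ¬ r v v) ∧ ∀ u v : V, u ≠ v → (r u v ↔ ¬ r v u)

def TransOn {V : Type*} (r : V → V → Prop) (S : Set V) : Prop :=
  ∀ a ∈ S, ∀ b ∈ S, ∀ c ∈ S, r a b → r b c → r a c

def Colorable {V : Type*} (r : V → V → Prop) (k : ℕ) : Prop :=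
  ∃ f : V → Fin k, ∀ c : Fin k, TransOn r {v | f v = c}

def pal7 (i j : ZMod 7) : Prop := i - j = 1 ∨ i - j = 2 ∨ i - j = 4

/-- Vertices of the blow-up: `none` is vertex 0 of `Pal₇`, and `some (i, m)`
is the `m`-th copy of vertex `i + 1` of `Pal₇`. -/
def DV : Type := Option (Fin 6 × ZMod 3)

instance : Fintype DV := instFintypeOption

/-- The vertex of `Pal₇` that a vertex of the blow-up comes from. -/
def proj : DV → ZMod 7
  | none => 0
  | some (i, _) => (i : ℕ) + 1

/-- Arcs of the blow-up: between copies of distinct `Pal₇`-vertices follow `Pal₇`,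
and each triple of copies of one vertex forms a directed triangle. -/
def Darc (u v : DV) : Prop :=
  match u, v with
  | none, none => False
  | none, some (k, _) => pal7 0 ((k : ℕ) + 1)
  | some (i, _), none => pal7 ((i : ℕ) + 1) 0
  | some (i, m), some (k, l) =>
      if i = k then l = m + 1 else pal7 ((i : ℕ) + 1) ((k : ℕ) + 1)

-- auxiliary decidability
instance (i j : ZMod 7) : Decidable (pal7 i j) := by unfold pal7; infer_instance
instance : DecidableEq DV := fun a b => by unfold DV at a b ⊢; infer_instance
instance (u v : DV) : Decidable (Darc u v) := by
  rcases u with _ | ⟨i, m⟩ <;> rcases v with _ | ⟨k, l⟩ <;> simp only [Darc] <;> infer_instance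

lemma pal7_irrefl : ∀ a : ZMod 7, ¬ pal7 a a := by decide
lemma pal7_asymm : ∀ a b : ZMod 7, pal7 a b → ¬ pal7 b a := by decide

lemma pal7_card : ∀ S : Finset (ZMod 7),
    (∀ a ∈ S, ∀ b ∈ S, ∀ c ∈ S, pal7 a b → pal7 b c → pal7 a c) → S.card ≤ 3 := by decide

lemma darc_iff : ∀ u v : DV, proj u ≠ proj v → (Darc u v ↔ pal7 (proj u) (proj v)) := by decide

lemma triple_cycle : ∀ i : Fin 6,
    Darc (some (i, 0)) (some (i, 1)) ∧ Darc (some (i, 1)) (some (i, 2)) ∧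
      ¬ Darc (some (i, 0)) (some (i, 2)) := by unfold Darc; decide

lemma surj_aux : ∀ j : ZMod 7, j ≠ 0 → ∃ i : Fin 6, ((i : ℕ) + 1 : ZMod 7) = j := by decide

lemma sum_lb : (∑ j : ZMod 7, (if j = 0 then 1 else 2)) = 13 := by decide

/-- Abstract double-counting: a `Fin 4 × ZMod 7` incidence relation with all "rows"
of size ≤ 3 cannot have the column `0` nonempty and all other columns of size ≥ 2. -/
lemma count_lemma (R : Fin 4 → ZMod 7 → Prop) [∀ c j, Decidable (R c j)]
    (hT : ∀ c, (Finset.univ.filter fun j => R c j).card ≤ 3)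
    (hlow : ∀ j : ZMod 7, (if j = 0 then 1 else 2) ≤
      (Finset.univ.filter fun c => R c j).card) : False := by
  have h : (13 : ℕ) ≤ 12 := by
    calc (13 : ℕ) = ∑ j : ZMod 7, (if j = 0 then 1 else 2) := sum_lb.symm
      _ ≤ ∑ j : ZMod 7, (Finset.univ.filter fun c => R c j).card :=
          Finset.sum_le_sum fun j _ => hlow j
      _ = ∑ j : ZMod 7, ∑ c : Fin 4, (if R c j then 1 else 0) :=
          Finset.sum_congr rfl fun j _ => Finset.card_filter _ _
      _ = ∑ c : Fin 4, ∑ j : ZMod 7, (if R c j then 1 else 0) := Finset.sum_comm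
      _ = ∑ c : Fin 4, (Finset.univ.filter fun j => R c j).card :=
          Finset.sum_congr rfl fun c _ => (Finset.card_filter _ _).symm
      _ ≤ ∑ _c : Fin 4, 3 := Finset.sum_le_sum fun c _ => hT c
      _ = 12 := by simp
  omega

theorem stmt15 : Fintype.card DV = 19 ∧ IsTournament Darc ∧ ¬ Colorable Darc 4 := by
  refine ⟨by decide, by unfold IsTournament; decide, ?_⟩
  rintro ⟨f, hf⟩
  set T : Fin 4 → Finset (ZMod 7) :=
    fun c => (Finset.univ.filter fun v : DV => f v = c).image proj with hTdef
  have hmemT : ∀ v : DV, proj v ∈ T (f v) := fun v =>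
    Finset.mem_image.2 ⟨v, Finset.mem_filter.2 ⟨Finset.mem_univ _, rfl⟩, rfl⟩
  -- each color class projects to a pal7-transitive set
  have hT : ∀ c, (T c).card ≤ 3 := by
    intro c
    apply pal7_card
    intro a ha b hb c' hc' hab hbc
    simp only [hTdef, Finset.mem_image, Finset.mem_filter, Finset.mem_univ, true_and]
      at ha hb hc'
    obtain ⟨u, hu, rfl⟩ := ha
    obtain ⟨v, hv, rfl⟩ := hb
    obtain ⟨w, hw, rfl⟩ := hc'
    have huv : proj u ≠ proj v := fun h => pal7_irrefl _ (h ▸ hab)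
    have hvw : proj v ≠ proj w := fun h => pal7_irrefl _ (h ▸ hbc)
    have huw : proj u ≠ proj w := by
      intro h
      exact pal7_asymm _ _ hab (by rw [h]; exact hbc)
    have d1 : Darc u v := (darc_iff u v huv).2 hab
    have d2 : Darc v w := (darc_iff v w hvw).2 hbc
    exact (darc_iff u w huw).1 (hf c u hu v hv w hw d1 d2)
  -- lower bound on the number of colors seen at each pal7-vertex
  have hlow : ∀ j : ZMod 7, (if j = 0 then 1 else 2) ≤
      (Finset.univ.filter fun c : Fin 4 => j ∈ T c).card := by
    intro j
    by_cases hj : j = 0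
    · subst hj
      rw [if_pos rfl]
      exact Finset.card_pos.2 ⟨f none, Finset.mem_filter.2 ⟨Finset.mem_univ _, hmemT none⟩⟩
    · rw [if_neg hj]
      obtain ⟨i, rfl⟩ := surj_aux j hj
      have hmem : ∀ m : ZMod 3, f (some (i, m)) ∈
          (Finset.univ.filter fun c : Fin 4 => ((i : ℕ) + 1 : ZMod 7) ∈ T c) := fun m =>
        Finset.mem_filter.2 ⟨Finset.mem_univ _, hmemT (some (i, m))⟩
      have hne : f (some (i, 0)) ≠ f (some (i, 1)) ∨ f (some (i, 1)) ≠ f (some (i, 2)) := by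
        by_contra h
        push_neg at h
        obtain ⟨h1, h2⟩ := h
        obtain ⟨d1, d2, d3⟩ := triple_cycle i
        exact d3 (hf (f (some (i, 0))) _ rfl _ h1.symm _ (h1.trans h2).symm d1 d2)
      rcases hne with hne | hne
      · exact Finset.one_lt_card.2 ⟨_, hmem 0, _, hmem 1, hne⟩
      · exact Finset.one_lt_card.2 ⟨_, hmem 1, _, hmem 2, hne⟩
  -- double counting
  refine count_lemma (fun c j => j ∈ T c) ?_ hlow
  intro c
  have : (Finset.univ.filter fun j => j ∈ T c) = T c := by
    ext x; simp
  rw [this]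
  exact hT c
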